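/- Let p be an odd prime, n ≥ 1, and λ a unit of ZMod (p^n) with λ^(p^n) = 1 and λ ≠ 1. Let s < n be the natural number such that λ - 1 is divisible by p^s but not by p^(s+1) in ZMod (p^n). Then the abelianization of G(λ,n,n) has cardinality p^(n+s), i.e., Nat.card (Abelianization (G(λ,n,n))) = p^(n+s). -/

import Mathlib

def IsBeauvilleStructure {G : Type*} [Group G] (x y z a b c : G) : Prop :=
  x * y * z = 1 ∧ a * b * c = 1 ∧
  Subgroup.closure {x, y, z} = ⊤ ∧ Subgroup.closure {a, b, c} = ⊤ ∧
  ∀ u ∈ ({x, y, z} : Set G), ∀ v ∈ ({a, b, c} : Set G), ∀ g : G, ∀ i j : ℤ,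
    u ^ i = g * v ^ j * g⁻¹ → u ^ i = 1

/-- The homomorphism `ZMod (p^n) → (ZMod (p^m))ˣ` sending (the class of) `x` to `λ^x`,
well-defined since `λ^(p^n) = 1`. -/
def zmodUnitHom (p m n : ℕ) (lam : (ZMod (p^m))ˣ) (h : lam ^ (p^n) = 1) :
    Multiplicative (ZMod (p^n)) →* (ZMod (p^m))ˣ :=
  AddMonoidHom.toMultiplicativeLeft
    (ZMod.lift (p^n) ⟨(zmultiplesHom (Additive (ZMod (p^m))ˣ)) (Additive.ofMul lam), by
      show ((p^n : ℕ) : ℤ) • Additive.ofMul lam = 0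
      rw [← ofMul_zpow, zpow_natCast, h]
      rfl⟩)

/-- Additive automorphisms of `R` as multiplicative automorphisms of `Multiplicative R`. -/
def addAutToMulAut (R : Type*) [AddZeroClass R] : Multiplicative (AddAut R) →* MulAut (Multiplicative R) where
  toFun e := AddEquiv.toMultiplicative e.toAdd
  map_one' := rfl
  map_mul' _ _ := rfl

/-- The action of `ZMod (p^n)` on `ZMod (p^m)` where `x` acts by multiplication by `λ^x`. -/
def beauvilleAut (p m n : ℕ) (lam : (ZMod (p^m))ˣ) (h : lam ^ (p^n) = 1) :
    Multiplicative (ZMod (p^n)) →* MulAut (Multiplicative (ZMod (p^m))) :=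
  ((addAutToMulAut (ZMod (p^m))).comp AddAut.mulLeft).comp (zmodUnitHom p m n lam h)

/-- The semidirect product `G(λ,m,n) = ZMod (p^m) ⋊_λ ZMod (p^n)`. -/
abbrev BeauvilleGroup (p m n : ℕ) (lam : (ZMod (p^m))ˣ) (h : lam ^ (p^n) = 1) :=
  SemidirectProduct (Multiplicative (ZMod (p^m))) (Multiplicative (ZMod (p^n)))
    (beauvilleAut p m n lam h)


section Aux

open scoped commutatorElement

variable (p n : ℕ) (lam : (ZMod (p^n))ˣ) (h : lam ^ (p^n) = 1)

lemma phi_apply (x m : Multiplicative (ZMod (p^n))) :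
    beauvilleAut p n n lam h x m
      = Multiplicative.ofAdd (((zmodUnitHom p n n lam h x : (ZMod (p^n))ˣ) : ZMod (p^n)) * m.toAdd) := rfl

lemma phi_inv_apply (x m : Multiplicative (ZMod (p^n))) :
    (beauvilleAut p n n lam h x)⁻¹ m
      = Multiplicative.ofAdd ((((zmodUnitHom p n n lam h x)⁻¹ : (ZMod (p^n))ˣ) : ZMod (p^n)) * m.toAdd) := by
  rw [← map_inv, phi_apply, map_inv]

lemma comm_left (g k : BeauvilleGroup p n n lam h) :
    Multiplicative.toAdd (⁅g, k⁆.left)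
      = (1 - ((zmodUnitHom p n n lam h k.right : (ZMod (p^n))ˣ) : ZMod (p^n))) * Multiplicative.toAdd g.left
        + (((zmodUnitHom p n n lam h g.right : (ZMod (p^n))ˣ) : ZMod (p^n)) - 1) * Multiplicative.toAdd k.left := by
  simp only [commutatorElement_def, SemidirectProduct.mul_left, SemidirectProduct.inv_left,
    SemidirectProduct.mul_right, SemidirectProduct.inv_right, MulAut.mul_apply,
    phi_apply, phi_inv_apply, toAdd_mul, toAdd_ofAdd, toAdd_inv, map_mul, map_inv, Units.val_mul]
  set u := ((zmodUnitHom p n n lam h g.right : (ZMod (p^n))ˣ))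
  set v := ((zmodUnitHom p n n lam h k.right : (ZMod (p^n))ˣ))
  set a := Multiplicative.toAdd g.left
  set b := Multiplicative.toAdd k.left
  have h1 : (u : ZMod (p^n)) * ↑u⁻¹ = 1 := u.mul_inv
  have h2 : (v : ZMod (p^n)) * ↑v⁻¹ = 1 := v.mul_inv
  linear_combination (-(↑v*a) - b*↑v*(↑v⁻¹:ZMod (p^n))) * h1 + (-b) * h2

lemma comm_right (g k : BeauvilleGroup p n n lam h) : (⁅g, k⁆).right = 1 := by
  have : SemidirectProduct.rightHom ⁅g, k⁆ = ⁅SemidirectProduct.rightHom g, SemidirectProduct.rightHom k⁆ :=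
    map_commutatorElement _ _ _
  rw [SemidirectProduct.rightHom_eq_right] at this
  rw [this, commutatorElement_eq_one_iff_commute]
  exact mul_comm _ _

lemma zmodUnitHom_ofAdd [NeZero (p^n)] (x : ZMod (p^n)) :
    zmodUnitHom p n n lam h (Multiplicative.ofAdd x) = lam ^ x.val := by
  have hx : x = (((x.val : ℤ)) : ZMod (p^n)) := by
    rw [Int.cast_natCast, ZMod.natCast_zmod_val]
  rw [show (Multiplicative.ofAdd x) = Multiplicative.ofAdd (((x.val : ℤ) : ZMod (p^n))) from by rw [← hx]]
  simp only [zmodUnitHom, AddMonoidHom.toMultiplicativeLeft, MonoidHom.coe_mk, OneHom.coe_mk,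
    Equiv.coe_fn_mk, toAdd_ofAdd, ZMod.lift_coe]
  show Additive.toMul ((ZMod.lift (p ^ n) ⟨(zmultiplesHom (Additive (ZMod (p ^ n))ˣ)) (Additive.ofMul lam), _⟩) (((x.val : ℤ) : ZMod (p^n)))) = _
  rw [ZMod.lift_coe]
  rw [show ((zmultiplesHom (Additive (ZMod (p ^ n))ˣ)) (Additive.ofMul lam)) ((x.val:ℤ))
      = (x.val:ℤ) • Additive.ofMul lam from rfl, ← ofMul_zpow, zpow_natCast]
  rfl

lemma lam_sub_one_dvd [NeZero (p^n)] (x : Multiplicative (ZMod (p^n))) :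
    ((lam : ZMod (p^n)) - 1) ∣ ((zmodUnitHom p n n lam h x : (ZMod (p^n))ˣ) : ZMod (p^n)) - 1 := by
  rw [show x = Multiplicative.ofAdd (Multiplicative.toAdd x) from rfl, zmodUnitHom_ofAdd,
    Units.val_pow_eq_pow_val]
  simpa using sub_dvd_pow_sub_pow ((lam : ZMod (p^n))) 1 (Multiplicative.toAdd x).val

lemma mem_zmultiples_iff_dvd {N : ℕ} [NeZero N] (d z : ZMod N) :
    z ∈ AddSubgroup.zmultiples d ↔ d ∣ z := by
  rw [AddSubgroup.mem_zmultiples_iff]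
  constructor
  · rintro ⟨k, rfl⟩
    exact ⟨(k : ZMod N), by rw [zsmul_eq_mul, mul_comm]⟩
  · rintro ⟨c, rfl⟩
    refine ⟨(c.val : ℤ), ?_⟩
    rw [zsmul_eq_mul, Int.cast_natCast, ZMod.natCast_zmod_val, mul_comm]

/-- The commutator subgroup of the Beauville group is `inl` of the multiples of `λ - 1`. -/
lemma commutator_beauville_eq [NeZero (p^n)] [Fact (1 < p^n)] :
    commutator (BeauvilleGroup p n n lam h)
      = Subgroup.map SemidirectProduct.inl
          (AddSubgroup.toSubgroup (AddSubgroup.zmultiples ((lam : ZMod (p^n)) - 1))) := by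
  apply le_antisymm
  · rw [commutator_def, Subgroup.commutator_le]
    intro g _ k _
    refine ⟨⁅g, k⁆.left, ?_, ?_⟩
    · show Multiplicative.toAdd (⁅g, k⁆.left) ∈ AddSubgroup.zmultiples ((lam : ZMod (p^n)) - 1)
      rw [mem_zmultiples_iff_dvd, comm_left]
      refine dvd_add (Dvd.dvd.mul_right ?_ _) (Dvd.dvd.mul_right ?_ _)
      · rw [show (1 : ZMod (p^n)) - _ = -((((zmodUnitHom p n n lam h k.right : (ZMod (p^n))ˣ) : ZMod (p^n))) - 1) from by ring]
        exact (lam_sub_one_dvd p n lam h k.right).neg_right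
      · exact lam_sub_one_dvd p n lam h g.right
    · ext
      · rfl
      · rw [comm_right]; rfl
  · rintro g ⟨m, hm, rfl⟩
    have hm' : Multiplicative.toAdd m ∈ AddSubgroup.zmultiples ((lam : ZMod (p^n)) - 1) := hm
    rw [AddSubgroup.mem_zmultiples_iff] at hm'
    obtain ⟨k, hk⟩ := hm'
    have key : (SemidirectProduct.inl m : BeauvilleGroup p n n lam h)
        = ⁅(SemidirectProduct.inr (Multiplicative.ofAdd (1 : ZMod (p^n))) : BeauvilleGroup p n n lam h),
            SemidirectProduct.inl (Multiplicative.ofAdd ((k : ZMod (p^n))))⁆ := by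
      ext
      · show m = _
        apply Multiplicative.toAdd.injective
        rw [comm_left]
        simp only [SemidirectProduct.left_inr, SemidirectProduct.right_inr,
          SemidirectProduct.left_inl, SemidirectProduct.right_inl, toAdd_one, toAdd_ofAdd,
          map_one, Units.val_one]
        rw [zmodUnitHom_ofAdd, ZMod.val_one, pow_one, ← hk, zsmul_eq_mul]
        ring_nf
        rfl
      · rw [comm_right]; rfl
    rw [key, commutator_def]
    exact Subgroup.commutator_mem_commutator (Subgroup.mem_top _) (Subgroup.mem_top _)

end Aux

/-- For odd `p` and `λ ≠ 1` with `λ - 1` exactly divisible by `p^s` (`s < n`),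
the abelianization of `G(λ,n,n)` has cardinality `p^(n+s)`. -/
theorem card_abelianization_semidirect
    (p n : ℕ) (hp : p.Prime) (hodd : Odd p) (hn : 1 ≤ n)
    (lam : (ZMod (p ^ n))ˣ) (h : lam ^ (p ^ n) = 1) (hlam : lam ≠ 1)
    (s : ℕ) (hs : s < n)
    (hdvd : ∃ b : ZMod (p ^ n), (lam : ZMod (p ^ n)) - 1 = (p : ZMod (p ^ n)) ^ s * b)
    (hndvd : ¬ ∃ b : ZMod (p ^ n), (lam : ZMod (p ^ n)) - 1 = (p : ZMod (p ^ n)) ^ (s + 1) * b) :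
    Nat.card (Abelianization (BeauvilleGroup p n n lam h)) = p ^ (n + s) := by
  haveI : NeZero (p ^ n) := ⟨pow_ne_zero n hp.pos.ne'⟩
  haveI : Fact (1 < p ^ n) := ⟨Nat.one_lt_pow (by omega) hp.one_lt⟩
  set R := ZMod (p ^ n)
  set d : R := (lam : R) - 1 with hd
  -- extract a unit
  obtain ⟨b, hb⟩ := hdvd
  have hbu : IsUnit b := by
    by_contra hbu
    apply hndvd
    have hcop : ¬ Nat.Coprime b.val (p ^ n) := by
      intro hc
      exact hbu (by rw [← ZMod.natCast_zmod_val b]; exact (ZMod.isUnit_iff_coprime _ _).mpr hc)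
    have hpb : p ∣ b.val := by
      by_contra hpb
      exact hcop (((Nat.coprime_pow_right_iff (by omega) _ _).mpr
        ((Nat.Prime.coprime_iff_not_dvd hp).mpr hpb).symm))
    obtain ⟨c, hc⟩ := hpb
    refine ⟨(c : R), ?_⟩
    rw [hb, ← ZMod.natCast_zmod_val b, hc]
    push_cast
    ring
  obtain ⟨u, hu⟩ := hbu
  have hassoc : Associated ((p : R) ^ s) d := ⟨u, by rw [hb, hu]⟩
  -- zmultiples equality
  have hzm : AddSubgroup.zmultiples d = AddSubgroup.zmultiples ((p : R) ^ s) := by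
    ext z
    rw [mem_zmultiples_iff_dvd, mem_zmultiples_iff_dvd, Associated.dvd_iff_dvd_left hassoc]
  -- cardinality of the commutator subgroup
  have hcardcomm : Nat.card (commutator (BeauvilleGroup p n n lam h)) = p ^ (n - s) := by
    rw [commutator_beauville_eq]
    rw [← Nat.card_congr (Subgroup.equivMapOfInjective _ _ SemidirectProduct.inl_injective).toEquiv]
    have e1 : ((AddSubgroup.toSubgroup (AddSubgroup.zmultiples d)) : Type _) ≃
        (AddSubgroup.zmultiples d : AddSubgroup R) := by
      exact ⟨fun x => ⟨x.1.toAdd, x.2⟩, fun a => ⟨.ofAdd a.1, a.2⟩, fun _ => rfl, fun _ => rfl⟩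
    rw [Nat.card_congr e1, hzm, Nat.card_zmultiples, ← Nat.cast_pow,
      ZMod.addOrderOf_coe _ (NeZero.ne _), Nat.gcd_eq_right (pow_dvd_pow p hs.le),
      Nat.pow_div hs.le hp.pos]
  -- cardinality of the whole group
  have hcardG : Nat.card (BeauvilleGroup p n n lam h) = p ^ n * p ^ n := by
    have eG : BeauvilleGroup p n n lam h ≃ (Multiplicative R × Multiplicative R) :=
      ⟨fun g => (g.left, g.right), fun q => ⟨q.1, q.2⟩, fun _ => rfl, fun _ => rfl⟩
    rw [Nat.card_congr eG, Nat.card_prod,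
      Nat.card_congr (Multiplicative.toAdd (α := R)), Nat.card_zmod]
  have hQ := Subgroup.card_eq_card_quotient_mul_card_subgroup
    (commutator (BeauvilleGroup p n n lam h))
  rw [hcardG, hcardcomm] at hQ
  have hgoal : Nat.card (Abelianization (BeauvilleGroup p n n lam h))
      = Nat.card (BeauvilleGroup p n n lam h ⧸ commutator (BeauvilleGroup p n n lam h)) := rfl
  rw [hgoal]
  have hpow : p ^ (n + s) * p ^ (n - s) = p ^ n * p ^ n := by
    rw [← pow_add, ← pow_add]
    congr 1
    omega
  have hfin : Nat.card (BeauvilleGroup p n n lam h ⧸ commutator (BeauvilleGroup p n n lam h))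
      * p ^ (n - s) = p ^ (n + s) * p ^ (n - s) := by rw [← hQ, hpow]
  exact Nat.eq_of_mul_eq_mul_right (pow_pos hp.pos _) hfin
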